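/- Let a, b, c, d, g, h : ℝ → ℝ be given coefficient functions and let ψ, φ : ℝ × ℝ → ℂ be continuously differentiable in t and twice continuously differentiable in x, satisfying the coupled NLS system with variable coefficients: i ψ_t = -a(t) ψ_xx + b(t)x²ψ - i c(t) x ψ_x - i d(t) ψ + g(t) ψ + h(t)(|ψ|²+|φ|²)ψ and i φ_t = a(t) φ_xx - b(t)x²φ - i c(t) x φ_x - i d(t) φ - g(t) φ - h(t)(|ψ|²+|φ|²)φ. Then for all (x,t): ∂_t (|ψ(x,t)|² + |φ(x,t)|²) = ∂_x [ 2a(t)·Im( conj(φ(x,t))·φ_x(x,t) - conj(ψ(x,t))·ψ_x(x,t) ) ] - c(t)·x·∂_x (|ψ(x,t)|² + |φ(x,t)|²) - 2d(t)·(|ψ(x,t)|² + |φ(x,t)|²). -/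

import Mathlib

lemma hasDerivAt_cre {f : ℝ → ℂ} {f' : ℂ} {t : ℝ} (hf : HasDerivAt f f' t) :
    HasDerivAt (fun s => (f s).re) f'.re t := by
  exact (Complex.reCLM.hasFDerivAt.comp_hasDerivAt t hf)

lemma hasDerivAt_cim {f : ℝ → ℂ} {f' : ℂ} {t : ℝ} (hf : HasDerivAt f f' t) :
    HasDerivAt (fun s => (f s).im) f'.im t := by
  exact (Complex.imCLM.hasFDerivAt.comp_hasDerivAt t hf)

lemma hasDerivAt_conj {f : ℝ → ℂ} {f' : ℂ} {t : ℝ} (hf : HasDerivAt f f' t) :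
    HasDerivAt (fun s => (starRingEnd ℂ) (f s)) ((starRingEnd ℂ) f') t := by
  exact ((Complex.conjCLE : ℂ →L[ℝ] ℂ).hasFDerivAt.comp_hasDerivAt t hf)

lemma hasDerivAt_normSq {f : ℝ → ℂ} {f' : ℂ} {t : ℝ} (hf : HasDerivAt f f' t) :
    HasDerivAt (fun s => ‖f s‖^2)
      (2 * ((f t).re * f'.re + (f t).im * f'.im)) t := by
  have h : HasDerivAt (fun s => (f s).re * (f s).re + (f s).im * (f s).im)
      ((f'.re * (f t).re + (f t).re * f'.re) + (f'.im * (f t).im + (f t).im * f'.im)) t :=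
    ((hasDerivAt_cre hf).mul (hasDerivAt_cre hf)).add
      ((hasDerivAt_cim hf).mul (hasDerivAt_cim hf))
  have heq : (fun s => ‖f s‖^2) = fun s => (f s).re * (f s).re + (f s).im * (f s).im := by
    funext s
    rw [Complex.sq_norm, Complex.normSq_apply]
  rw [heq]
  convert h using 1
  ring


lemma iteratedDeriv_two (f : ℝ → ℂ) : iteratedDeriv 2 f = deriv (deriv f) := by
  rw [iteratedDeriv_succ, iteratedDeriv_one]



/-- Partial derivative in the first (space) variable. -/
noncomputable def pderivX (f : ℝ → ℝ → ℂ) (x t : ℝ) : ℂ :=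
  deriv (fun x' => f x' t) x

/-- Second partial derivative in the first (space) variable. -/
noncomputable def pderivXX (f : ℝ → ℝ → ℂ) (x t : ℝ) : ℂ :=
  iteratedDeriv 2 (fun x' => f x' t) x

/-- Partial derivative in the second (time) variable. -/
noncomputable def pderivT (f : ℝ → ℝ → ℂ) (x t : ℝ) : ℂ :=
  deriv (fun t' => f x t') t

/-- The coupled NLS system with variable coefficients. -/
def CNLS (a b c d g h : ℝ → ℝ) (ψ φ : ℝ → ℝ → ℂ) : Prop :=
  ∀ x t : ℝ,
    (Complex.I * pderivT ψ x t =
      -(a t : ℂ) * pderivXX ψ x t + (b t : ℂ) * (x : ℂ) ^ 2 * ψ x t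
        - Complex.I * (c t : ℂ) * (x : ℂ) * pderivX ψ x t
        - Complex.I * (d t : ℂ) * ψ x t + (g t : ℂ) * ψ x t
        + (h t : ℂ) * ((‖ψ x t‖ ^ 2 + ‖φ x t‖ ^ 2 : ℝ) : ℂ) * ψ x t)
    ∧ (Complex.I * pderivT φ x t =
      (a t : ℂ) * pderivXX φ x t - (b t : ℂ) * (x : ℂ) ^ 2 * φ x t
        - Complex.I * (c t : ℂ) * (x : ℂ) * pderivX φ x t
        - Complex.I * (d t : ℂ) * φ x t - (g t : ℂ) * φ x t
        - (h t : ℂ) * ((‖ψ x t‖ ^ 2 + ‖φ x t‖ ^ 2 : ℝ) : ℂ) * φ x t)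

/-- Pointwise local mass-balance law for the variable-coefficient coupled NLS
system: the density `|ψ|² + |φ|²` satisfies
`∂ₜ(|ψ|²+|φ|²) = ∂ₓ[2a Im(conj φ · φₓ - conj ψ · ψₓ)] - c x ∂ₓ(|ψ|²+|φ|²) - 2d (|ψ|²+|φ|²)`. -/
theorem cnls_local_mass_balance
    (a b c d g h : ℝ → ℝ) (ψ φ : ℝ → ℝ → ℂ)
    (hψt : ∀ x, ContDiff ℝ 1 (fun t => ψ x t))
    (hψx : ∀ t, ContDiff ℝ 2 (fun x => ψ x t))
    (hφt : ∀ x, ContDiff ℝ 1 (fun t => φ x t))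
    (hφx : ∀ t, ContDiff ℝ 2 (fun x => φ x t))
    (hsys : CNLS a b c d g h ψ φ) :
    ∀ x t : ℝ,
      deriv (fun t' => ‖ψ x t'‖ ^ 2 + ‖φ x t'‖ ^ 2) t
        = deriv (fun x' => 2 * a t *
            ((starRingEnd ℂ) (φ x' t) * pderivX φ x' t
              - (starRingEnd ℂ) (ψ x' t) * pderivX ψ x' t).im) x
          - c t * x * deriv (fun x' => ‖ψ x' t‖ ^ 2 + ‖φ x' t‖ ^ 2) x
          - 2 * d t * (‖ψ x t‖ ^ 2 + ‖φ x t‖ ^ 2) := by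
  intro x t
  have hTψ : Differentiable ℝ (fun t' => ψ x t') := (hψt x).differentiable one_ne_zero
  have hTφ : Differentiable ℝ (fun t' => φ x t') := (hφt x).differentiable one_ne_zero
  have hXψ2 : ContDiff ℝ (1+1) (fun x' => ψ x' t) := by exact_mod_cast hψx t
  have hXφ2 : ContDiff ℝ (1+1) (fun x' => φ x' t) := by exact_mod_cast hφx t
  have hXψ := contDiff_succ_iff_deriv.mp hXψ2
  have hXφ := contDiff_succ_iff_deriv.mp hXφ2
  have hDψ : Differentiable ℝ (deriv (fun x' => ψ x' t)) := hXψ.2.2.differentiable one_ne_zero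
  have hDφ : Differentiable ℝ (deriv (fun x' => φ x' t)) := hXφ.2.2.differentiable one_ne_zero
  -- time derivative of the density
  have hTd : deriv (fun t' => ‖ψ x t'‖ ^ 2 + ‖φ x t'‖ ^ 2) t
      = 2 * ((ψ x t).re * (deriv (fun t' => ψ x t') t).re
            + (ψ x t).im * (deriv (fun t' => ψ x t') t).im)
        + 2 * ((φ x t).re * (deriv (fun t' => φ x t') t).re
            + (φ x t).im * (deriv (fun t' => φ x t') t).im) :=
    ((hasDerivAt_normSq (hTψ t).hasDerivAt).add (hasDerivAt_normSq (hTφ t).hasDerivAt)).deriv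
  -- space derivative of the density
  have hXd : deriv (fun x' => ‖ψ x' t‖ ^ 2 + ‖φ x' t‖ ^ 2) x
      = 2 * ((ψ x t).re * (deriv (fun x' => ψ x' t) x).re
            + (ψ x t).im * (deriv (fun x' => ψ x' t) x).im)
        + 2 * ((φ x t).re * (deriv (fun x' => φ x' t) x).re
            + (φ x t).im * (deriv (fun x' => φ x' t) x).im) :=
    ((hasDerivAt_normSq (hXψ.1 x).hasDerivAt).add (hasDerivAt_normSq (hXφ.1 x).hasDerivAt)).deriv
  -- derivative of the flux
  have hFd : deriv (fun x' => 2 * a t *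
        ((starRingEnd ℂ) (φ x' t) * pderivX φ x' t
          - (starRingEnd ℂ) (ψ x' t) * pderivX ψ x' t).im) x
      = 2 * a t *
        (((starRingEnd ℂ) (deriv (fun x' => φ x' t) x) * deriv (fun x' => φ x' t) x
            + (starRingEnd ℂ) (φ x t) * deriv (deriv (fun x' => φ x' t)) x)
          - ((starRingEnd ℂ) (deriv (fun x' => ψ x' t) x) * deriv (fun x' => ψ x' t) x
            + (starRingEnd ℂ) (ψ x t) * deriv (deriv (fun x' => ψ x' t)) x)).im := by
    have Hφ : HasDerivAt (fun x' => (starRingEnd ℂ) (φ x' t) * deriv (fun x'' => φ x'' t) x')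
        ((starRingEnd ℂ) (deriv (fun x' => φ x' t) x) * deriv (fun x' => φ x' t) x
          + (starRingEnd ℂ) (φ x t) * deriv (deriv (fun x' => φ x' t)) x) x :=
      (hasDerivAt_conj (hXφ.1 x).hasDerivAt).mul (hDφ x).hasDerivAt
    have Hψ : HasDerivAt (fun x' => (starRingEnd ℂ) (ψ x' t) * deriv (fun x'' => ψ x'' t) x')
        ((starRingEnd ℂ) (deriv (fun x' => ψ x' t) x) * deriv (fun x' => ψ x' t) x
          + (starRingEnd ℂ) (ψ x t) * deriv (deriv (fun x' => ψ x' t)) x) x :=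
      (hasDerivAt_conj (hXψ.1 x).hasDerivAt).mul (hDψ x).hasDerivAt
    exact ((hasDerivAt_cim (Hφ.sub Hψ)).const_mul (2 * a t)).deriv
  obtain ⟨e1, e2⟩ := hsys x t
  simp only [pderivT, pderivX, pderivXX, iteratedDeriv_two] at e1 e2
  have e1re := congrArg Complex.re e1
  have e1im := congrArg Complex.im e1
  have e2re := congrArg Complex.re e2
  have e2im := congrArg Complex.im e2
  rw [hTd, hFd, hXd]
  simp only [← Complex.ofReal_pow, Complex.add_re, Complex.add_im, Complex.sub_re,
    Complex.sub_im, Complex.mul_re, Complex.mul_im, Complex.neg_re, Complex.neg_im,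
    Complex.I_re, Complex.I_im, Complex.ofReal_re, Complex.ofReal_im,
    Complex.conj_re, Complex.conj_im, Complex.sq_norm,
    Complex.normSq_apply, Complex.ofReal_add] at e1re e1im e2re e2im ⊢
  linear_combination (2 * (ψ x t).re) * e1im - (2 * (ψ x t).im) * e1re
    + (2 * (φ x t).re) * e2im - (2 * (φ x t).im) * e2re
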